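/- arXiv:1812.00134 — 5 statements merged into one kernel-verified Lean document; each statement's English description precedes it below -/
import Mathlib

section
/- Let U be a finite set of size n and let 𝒮 be a finite family of subsets of U each of size d. Then there exists a probability distribution p on 𝒮 such that for every T ∈ 𝒮, the expected intersection size ∑_{S∈𝒮} p(S)·|S ∩ T| is at least d²/n. -/
open Finset Filter

theorem stmt_8 {α : Type*} [DecidableEq α] (U : Finset α) (n d : ℕ)
    (hU : U.card = n) (hn : 1 ≤ n)
    (𝒮 : Finset (Finset α)) (h𝒮 : 𝒮.Nonempty)
    (hsub : ∀ S ∈ 𝒮, S ⊆ U) (hcard : ∀ S ∈ 𝒮, S.card = d) :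
    ∃ p : Finset α → ℝ,
      (∀ S ∈ 𝒮, 0 ≤ p S) ∧ (∑ S ∈ 𝒮, p S = 1) ∧
      ∀ T ∈ 𝒮, (d : ℝ) ^ 2 / n ≤ ∑ S ∈ 𝒮, p S * ((S ∩ T).card : ℝ) := by
  classical
  haveI : Nonempty {S // S ∈ 𝒮} := h𝒮.to_subtype
  set ι := {S // S ∈ 𝒮} with hι
  let m : ι → ι → ℝ := fun S T => (((S : Finset α) ∩ (T : Finset α)).card : ℝ)
  let f : (ι → ℝ) → ℝ := fun q => ∑ S : ι, ∑ T : ι, q S * q T * m S T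
  let B : (ι → ℝ) → (ι → ℝ) → ℝ := fun a b => ∑ S : ι, ∑ T : ι, a S * b T * m S T
  have hfc : Continuous f := by
    apply continuous_finset_sum
    intro S _
    apply continuous_finset_sum
    intro T _
    exact ((continuous_apply S).mul (continuous_apply T)).mul continuous_const
  obtain ⟨i0⟩ := (inferInstance : Nonempty ι)
  have hne : (stdSimplex ℝ ι).Nonempty := by
    refine ⟨fun j => if j = i0 then 1 else 0, fun j => by positivity, ?_⟩
    simp [Finset.sum_ite_eq' Finset.univ i0]
  obtain ⟨p, hps, hmin⟩ :=
    (isCompact_stdSimplex ℝ ι).exists_isMinOn hne hfc.continuousOn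
  -- expansion lemma
  have expand : ∀ (c1 c2 : ℝ) (a b : ι → ℝ),
      f (fun i => c1 * a i + c2 * b i)
        = c1 ^ 2 * f a + c1 * c2 * B a b + c2 * c1 * B b a + c2 ^ 2 * f b := by
    intro c1 c2 a b
    simp only [f, B, Finset.mul_sum, ← Finset.sum_add_distrib]
    refine Finset.sum_congr rfl fun S _ => Finset.sum_congr rfl fun T _ => ?_
    ring
  -- the key lower bound on f p
  let w : α → ℝ := fun x => ∑ S : ι, p S * (if x ∈ (S : Finset α) then 1 else 0)
  have hm : ∀ S T : ι, m S T =
      ∑ x ∈ U, (if x ∈ (S : Finset α) then (1:ℝ) else 0) *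
        (if x ∈ (T : Finset α) then (1:ℝ) else 0) := by
    intro S T
    have hsub' : (S : Finset α) ∩ (T : Finset α) ⊆ U :=
      (Finset.inter_subset_left).trans (hsub _ S.2)
    have : ∀ x ∈ U, (if x ∈ (S : Finset α) then (1:ℝ) else 0) *
        (if x ∈ (T : Finset α) then (1:ℝ) else 0)
        = if x ∈ (S : Finset α) ∩ (T : Finset α) then (1:ℝ) else 0 := by
      intro x _
      by_cases h1 : x ∈ (S : Finset α) <;> by_cases h2 : x ∈ (T : Finset α) <;>
        simp [h1, h2]
    rw [Finset.sum_congr rfl this, Finset.sum_ite_mem, Finset.inter_eq_right.mpr hsub',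
      Finset.sum_const, nsmul_eq_mul, mul_one]
  have hfp : f p = ∑ x ∈ U, (w x) ^ 2 := by
    have h1 : ∀ S T : ι, p S * p T * m S T
        = ∑ x ∈ U, (p S * (if x ∈ (S : Finset α) then (1:ℝ) else 0)) *
            (p T * (if x ∈ (T : Finset α) then (1:ℝ) else 0)) := by
      intro S T
      rw [hm S T, Finset.mul_sum]
      exact Finset.sum_congr rfl fun x _ => by ring
    calc f p = ∑ S : ι, ∑ T : ι, ∑ x ∈ U,
          (p S * (if x ∈ (S : Finset α) then (1:ℝ) else 0)) *
            (p T * (if x ∈ (T : Finset α) then (1:ℝ) else 0)) :=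
        Finset.sum_congr rfl fun S _ => Finset.sum_congr rfl fun T _ => h1 S T
      _ = ∑ S : ι, ∑ x ∈ U, ∑ T : ι,
          (p S * (if x ∈ (S : Finset α) then (1:ℝ) else 0)) *
            (p T * (if x ∈ (T : Finset α) then (1:ℝ) else 0)) :=
        Finset.sum_congr rfl fun S _ => Finset.sum_comm
      _ = ∑ x ∈ U, ∑ S : ι, ∑ T : ι,
          (p S * (if x ∈ (S : Finset α) then (1:ℝ) else 0)) *
            (p T * (if x ∈ (T : Finset α) then (1:ℝ) else 0)) := Finset.sum_comm
      _ = ∑ x ∈ U, (∑ S : ι, p S * (if x ∈ (S : Finset α) then (1:ℝ) else 0)) *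
            (∑ T : ι, p T * (if x ∈ (T : Finset α) then (1:ℝ) else 0)) :=
        Finset.sum_congr rfl fun x _ => (Finset.sum_mul_sum _ _ _ _).symm
      _ = ∑ x ∈ U, (w x) ^ 2 := Finset.sum_congr rfl fun x _ => (pow_two _).symm
  have hwsum : ∑ x ∈ U, w x = (d : ℝ) := by
    simp only [w]
    rw [Finset.sum_comm]
    have : ∀ S : ι, ∑ x ∈ U, p S * (if x ∈ (S : Finset α) then (1:ℝ) else 0)
        = p S * d := by
      intro S
      rw [← Finset.mul_sum]
      congr 1
      rw [Finset.sum_ite_mem, Finset.inter_eq_right.mpr (hsub _ S.2),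
        Finset.sum_const, nsmul_eq_mul, mul_one, hcard _ S.2]
    rw [Finset.sum_congr rfl fun S _ => this S, ← Finset.sum_mul, hps.2, one_mul]
  have hnpos : (0:ℝ) < n := by exact_mod_cast hn
  have hlow : (d : ℝ) ^ 2 / n ≤ f p := by
    rw [div_le_iff₀ hnpos, hfp]
    have := sq_sum_le_card_mul_sum_sq (s := U) (f := w)
    rw [hwsum, hU] at this
    calc (d:ℝ)^2 ≤ (n:ℝ) * ∑ x ∈ U, w x ^ 2 := by exact_mod_cast this
    _ = (∑ x ∈ U, w x ^ 2) * n := by ring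
  -- define the answer distribution
  refine ⟨fun A => if h : A ∈ 𝒮 then p ⟨A, h⟩ else 0, ?_, ?_, ?_⟩
  · intro S hS
    dsimp only
    rw [dif_pos hS]
    exact hps.1 _
  · have h1 : ∑ S ∈ 𝒮, (if h : S ∈ 𝒮 then p ⟨S, h⟩ else 0) = ∑ S ∈ 𝒮.attach, p S := by
      rw [← Finset.sum_attach 𝒮 (fun A => if h : A ∈ 𝒮 then p ⟨A, h⟩ else 0)]
      exact Finset.sum_congr rfl fun x _ => dif_pos x.2
    rw [h1, ← Finset.univ_eq_attach]
    exact hps.2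
  · intro T hT
    set T0 : ι := ⟨T, hT⟩ with hT0
    set L : ℝ := ∑ S : ι, p S * m S T0 with hL
    have hgoal : ∑ S ∈ 𝒮, (if h : S ∈ 𝒮 then p ⟨S, h⟩ else 0) * ((S ∩ T).card : ℝ) = L := by
      rw [← Finset.sum_attach 𝒮 (fun A => (if h : A ∈ 𝒮 then p ⟨A, h⟩ else 0) * ((A ∩ T).card : ℝ)),
        hL, ← Finset.univ_eq_attach]
      exact Finset.sum_congr rfl fun S _ => by rw [dif_pos S.2]
    rw [hgoal]
    refine hlow.trans ?_
    -- perturbation argument: f p ≤ L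
    set δ : ι → ℝ := fun S => if S = T0 then 1 else 0 with hδ
    have hBpδ : B p δ = L := by
      simp only [B, δ, hL, mul_ite, mul_one, mul_zero, ite_mul, zero_mul]
      refine Finset.sum_congr rfl fun S _ => ?_
      simp [Finset.sum_ite_eq' Finset.univ T0]
    have hBδp : B δ p = L := by
      simp only [B, δ, hL, ite_mul, one_mul, zero_mul]
      rw [Finset.sum_comm]
      refine Finset.sum_congr rfl fun S _ => ?_
      rw [Finset.sum_ite_eq' Finset.univ T0]
      simp only [Finset.mem_univ, if_true]
      congr 1
      simp only [m]
      rw [Finset.inter_comm]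
    have hfδ : f δ = (d : ℝ) := by
      simp only [f, δ, ite_mul, one_mul, zero_mul, mul_ite, mul_one, mul_zero,
        Finset.sum_ite_eq' Finset.univ T0, Finset.mem_univ, if_true]
      simp only [m, Finset.inter_self]
      rw [hcard _ hT]
    have hq : ∀ t ∈ Set.Ioc (0:ℝ) 1,
        (fun i => (1-t) * p i + t * δ i) ∈ stdSimplex ℝ ι := by
      intro t ht
      constructor
      · intro i
        have h1 : 0 ≤ (1-t) := by linarith [ht.2]
        have h2 : (0:ℝ) ≤ δ i := by simp only [δ]; positivity
        have h3 := hps.1 i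
        have h4 := mul_nonneg h1 h3
        have h5 := mul_nonneg ht.1.le h2
        dsimp only
        linarith
      · rw [Finset.sum_add_distrib, ← Finset.mul_sum, ← Finset.mul_sum, hps.2]
        simp [δ, Finset.sum_ite_eq' Finset.univ T0]
    have hkey : ∀ t ∈ Set.Ioc (0:ℝ) 1, f p ≤ (1-t) * L + t * (f p + d) / 2 := by
      intro t ht
      have h1 := hmin (hq t ht)
      simp only [Set.mem_setOf_eq] at h1
      rw [expand (1-t) t p δ, hBpδ, hBδp, hfδ] at h1
      have ht0 := ht.1
      nlinarith [h1]
    have hlim : Tendsto (fun t : ℝ => (1-t) * L + t * (f p + d) / 2)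
        (nhdsWithin 0 (Set.Ioi 0)) (nhds L) := by
      have hc : Continuous (fun t : ℝ => (1-t) * L + t * (f p + d) / 2) :=
        ((continuous_const.sub continuous_id).mul continuous_const).add
          ((continuous_id.mul continuous_const).div_const 2)
      have := hc.tendsto 0
      simp only [sub_zero, zero_mul, one_mul, zero_div, add_zero] at this
      exact this.mono_left nhdsWithin_le_nhds
    refine ge_of_tendsto hlim ?_
    filter_upwards [Ioc_mem_nhdsGT_of_mem (Set.mem_Ico.mpr ⟨le_refl (0:ℝ), one_pos⟩)]
      with t ht
    exact hkey t ht
end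

section
/- Let U be a finite set of size n and 𝒮 a finite family of d-element subsets of U. Suppose q : 𝒮 → ℝ≥0 satisfies, for every S ∈ 𝒮, ∑_{u ∈ S} ∑_{T ∈ 𝒮, T ∋ u} q(T) ≤ d²/n. Then ∑_{T ∈ 𝒮} q(T) ≤ 1. -/
theorem stmt_9 {α : Type*} [DecidableEq α] (U : Finset α) (n d : ℕ)
    (hU : U.card = n) (hn : 1 ≤ n) (hd : 1 ≤ d)
    (𝒮 : Finset (Finset α))
    (hsub : ∀ S ∈ 𝒮, S ⊆ U) (hcard : ∀ S ∈ 𝒮, S.card = d)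
    (q : Finset α → ℝ) (hq : ∀ T ∈ 𝒮, 0 ≤ q T)
    (hfeas : ∀ S ∈ 𝒮, ∑ u ∈ S, ∑ T ∈ 𝒮.filter (fun T => u ∈ T), q T ≤ (d : ℝ) ^ 2 / n) :
    ∑ T ∈ 𝒮, q T ≤ 1 := by
  set w : α → ℝ := fun u => ∑ T ∈ 𝒮.filter (fun T => u ∈ T), q T with hw
  set Q : ℝ := ∑ T ∈ 𝒮, q T with hQ
  have hQ0 : 0 ≤ Q := Finset.sum_nonneg hq
  -- swap double sum lemma
  have swap : ∀ f : α → ℝ, ∑ u ∈ U, f u * w u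
      = ∑ T ∈ 𝒮, q T * ∑ u ∈ T, f u := by
    intro f
    have : ∀ u ∈ U, f u * w u = ∑ T ∈ 𝒮, (if u ∈ T then f u * q T else 0) := by
      intro u _
      rw [hw, Finset.mul_sum, Finset.sum_filter]
    rw [Finset.sum_congr rfl this, Finset.sum_comm]
    refine Finset.sum_congr rfl fun T hT => ?_
    rw [Finset.mul_sum]
    rw [← Finset.sum_filter]
    rw [Finset.filter_mem_eq_inter, Finset.inter_eq_right.mpr (hsub T hT)]
    exact Finset.sum_congr rfl fun u _ => mul_comm _ _
  -- ∑_U w = d * Q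
  have hsum : ∑ u ∈ U, w u = d * Q := by
    have := swap (fun _ => 1)
    simp only [one_mul] at this
    rw [this, hQ, Finset.mul_sum]
    refine Finset.sum_congr rfl fun T hT => ?_
    rw [Finset.sum_const, hcard T hT]
    ring
  -- ∑_U w^2 ≤ Q * d^2 / n
  have hsq : ∑ u ∈ U, w u ^ 2 ≤ Q * ((d : ℝ) ^ 2 / n) := by
    have := swap w
    simp only [← sq] at this
    rw [this, hQ, Finset.sum_mul]
    refine Finset.sum_le_sum fun S hS => ?_
    exact mul_le_mul_of_nonneg_left (hfeas S hS) (hq S hS)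
  have cs : (∑ u ∈ U, w u) ^ 2 ≤ (U.card : ℝ) * ∑ u ∈ U, w u ^ 2 :=
    sq_sum_le_card_mul_sum_sq
  rw [hsum, hU] at cs
  have hn' : (0:ℝ) < n := by exact_mod_cast hn
  have hd' : (0:ℝ) < d := by exact_mod_cast hd
  have key : ((d:ℝ) * Q) ^ 2 ≤ (n:ℝ) * (Q * ((d:ℝ)^2 / n)) :=
    le_trans cs (mul_le_mul_of_nonneg_left hsq (le_of_lt hn'))
  have : (d:ℝ)^2 * Q^2 ≤ (d:ℝ)^2 * Q := by
    have h2 : (n:ℝ) * (Q * ((d:ℝ)^2 / n)) = (d:ℝ)^2 * Q := by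
      field_simp
    nlinarith [key]
  have hQ2 : Q ^ 2 ≤ Q := le_of_mul_le_mul_left this (by positivity)
  nlinarith [hQ2, hQ0]
end

section
/- In a bipartite graph H = (U ∪ V_P, E) where every maximum matching matches all of V_P, together with a skeleton decomposition into pairs (S_i, T_i), i = 0,...,m, satisfying Γ(⋃_{i<j} S_i) = ⋃_{i<j} T_i for all j: if M* is a perfect matching of a supergraph G obtained by adding new online vertices V_A (with arbitrary edges to U), then for every t, |M*(V_A) ∩ ⋃_{i≤t} T_i| ≤ ∑_{i≤t} (|T_i| − |S_i|). -/
theorem stmt_12 {V : Type*} [DecidableEq V] [Fintype V]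
    (U VP VA : Finset V)
    (hUP : Disjoint U VP) (hUA : Disjoint U VA) (hPA : Disjoint VP VA)
    (EH : V → V → Prop) [DecidableRel EH]
    (hEH : ∀ a b, EH a b → a ∈ VP ∧ b ∈ U)
    (m : ℕ) (S T : Fin (m + 1) → Finset V)
    (hScard : ∀ i, (S i).card ≤ (T i).card)
    (hSdisj : ∀ i j, i ≠ j → Disjoint (S i) (S j))
    (hTdisj : ∀ i j, i ≠ j → Disjoint (T i) (T j))
    (hSpart : (Finset.univ : Finset (Fin (m + 1))).biUnion S = VP)
    (hTpart : (Finset.univ : Finset (Fin (m + 1))).biUnion T = U)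
    -- skeleton neighborhood property: Γ(⋃_{i ≤ t} S i) = ⋃_{i ≤ t} T i
    (hΓ : ∀ t : Fin (m + 1),
      U.filter (fun b => ∃ a, (∃ i ≤ t, a ∈ S i) ∧ EH a b) = (Finset.Iic t).biUnion T)
    -- M* is a perfect matching of G = H plus adversarial vertices VA
    (M : V → V)
    (hMinj : Set.InjOn M ↑(VP ∪ VA))
    (hMto : ∀ a ∈ VP ∪ VA, M a ∈ U)
    (hMsurj : (VP ∪ VA).image M = U)
    (hMH : ∀ a ∈ VP, EH a (M a)) :
    ∀ t : Fin (m + 1),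
      (((VA.image M) ∩ (Finset.Iic t).biUnion T).card : ℤ) ≤
        ∑ i ∈ Finset.Iic t, (((T i).card : ℤ) - ((S i).card : ℤ)) := by
  intro t
  set A := (VA.image M) ∩ (Finset.Iic t).biUnion T with hA
  set B := ((Finset.Iic t).biUnion S).image M with hB
  have hSsub : (Finset.Iic t).biUnion S ⊆ VP := by
    intro a ha
    simp only [Finset.mem_biUnion, Finset.mem_Iic] at ha
    obtain ⟨i, _, hi⟩ := ha
    rw [← hSpart]; exact Finset.mem_biUnion.mpr ⟨i, Finset.mem_univ _, hi⟩
  have hBsub : B ⊆ (Finset.Iic t).biUnion T := by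
    intro x hx
    obtain ⟨a, ha, rfl⟩ := Finset.mem_image.mp hx
    have haVP : a ∈ VP := hSsub ha
    have hMaU : M a ∈ U := hMto a (Finset.mem_union_left _ haVP)
    rw [← hΓ t]
    refine Finset.mem_filter.mpr ⟨hMaU, a, ?_, hMH a haVP⟩
    simp only [Finset.mem_biUnion, Finset.mem_Iic] at ha
    obtain ⟨i, hi, hai⟩ := ha
    exact ⟨i, hi, hai⟩
  have hdisj : Disjoint A B := by
    rw [Finset.disjoint_left]
    intro x hxA hxB
    obtain ⟨a, haA, hxa⟩ := Finset.mem_image.mp (Finset.mem_inter.mp hxA).1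
    obtain ⟨b, hbB, hxb⟩ := Finset.mem_image.mp hxB
    have hab : a = b := hMinj (Finset.mem_coe.mpr (Finset.mem_union_right _ haA))
      (Finset.mem_coe.mpr (Finset.mem_union_left _ (hSsub hbB))) (hxa.trans hxb.symm)
    exact Finset.disjoint_left.mp hPA (hab ▸ hSsub hbB) haA
  have hBcard : B.card = ((Finset.Iic t).biUnion S).card := by
    apply Finset.card_image_of_injOn
    intro a ha b hb h
    exact hMinj (Finset.mem_coe.mpr (Finset.mem_union_left _ (hSsub ha)))
      (Finset.mem_coe.mpr (Finset.mem_union_left _ (hSsub hb))) h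
  have hunion : A.card + B.card ≤ ((Finset.Iic t).biUnion T).card := by
    rw [← Finset.card_union_of_disjoint hdisj]
    exact Finset.card_le_card (Finset.union_subset (Finset.inter_subset_right) hBsub)
  have hS : ((Finset.Iic t).biUnion S).card = ∑ i ∈ Finset.Iic t, (S i).card :=
    Finset.card_biUnion (fun i _ j _ hij => hSdisj i j hij)
  have hT : ((Finset.Iic t).biUnion T).card = ∑ i ∈ Finset.Iic t, (T i).card :=
    Finset.card_biUnion (fun i _ j _ hij => hTdisj i j hij)
  rw [hBcard, hS, hT] at hunion
  have h2 : (A.card : ℤ) + ∑ i ∈ Finset.Iic t, ((S i).card : ℤ) ≤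
      ∑ i ∈ Finset.Iic t, ((T i).card : ℤ) := by exact_mod_cast hunion
  rw [Finset.sum_sub_distrib]
  linarith
end

section
/- Let δ ∈ [0,1] and define the semi-online ski rental strategy: buy immediately with probability q(x) = x·e^x/(e − (1−x)·e^x), and otherwise buy at (fractional) time z ∈ [x,1] with density p_x(z) = (1 − q(x))·e^z/(e − e^x), where x ∈ [0,1) is the guaranteed number of skiing days. Then for every u with x ≤ u ≤ 1, the expected cost q(x) + ∫_x^u (1+z)p_x(z)dz + ∫_u^1 u·p_x(z)dz equals u·e/(e − (1−x)e^x). -/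
open MeasureTheory

lemma integ_one_add_mul_exp (a b : ℝ) :
    (∫ z in a..b, (1 + z) * Real.exp z) = b * Real.exp b - a * Real.exp a := by
  have : ∀ z ∈ Set.uIcc a b, HasDerivAt (fun t => t * Real.exp t) ((1 + z) * Real.exp z) z := by
    intro z _
    have h := (hasDerivAt_id' z).mul (Real.hasDerivAt_exp z)
    exact h.congr_deriv (by ring)
  have := intervalIntegral.integral_eq_sub_of_hasDerivAt this
    (by apply Continuous.intervalIntegrable; continuity)
  simpa using this

theorem stmt_13 (x u : ℝ) (hx0 : 0 ≤ x) (hx1 : x < 1) (hxu : x ≤ u) (hu1 : u ≤ 1)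
    (q : ℝ) (hq : q = x * Real.exp x / (Real.exp 1 - (1 - x) * Real.exp x))
    (p : ℝ → ℝ) (hp : ∀ z, p z = (1 - q) * Real.exp z / (Real.exp 1 - Real.exp x)) :
    (q + ∫ z in x..(1 : ℝ), p z) = 1 ∧
    q + (∫ z in x..u, (1 + z) * p z) + (∫ z in u..(1 : ℝ), u * p z)
      = u * Real.exp 1 / (Real.exp 1 - (1 - x) * Real.exp x) := by
  have hex : Real.exp x < Real.exp 1 := Real.exp_lt_exp.2 hx1
  have hE : 0 < Real.exp 1 - Real.exp x := by linarith
  have hD : 0 < Real.exp 1 - (1 - x) * Real.exp x := by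
    have hxe : 0 ≤ x * Real.exp x := mul_nonneg hx0 (Real.exp_pos x).le
    nlinarith
  have hqval : 1 - q = (Real.exp 1 - Real.exp x) / (Real.exp 1 - (1 - x) * Real.exp x) := by
    rw [hq]; rw [eq_div_iff hD.ne', sub_mul, div_mul_cancel₀ _ hD.ne']; ring
  have hpval : ∀ z, p z = Real.exp z / (Real.exp 1 - (1 - x) * Real.exp x) := by
    intro z
    rw [hp, hqval]
    field_simp
  have I1 : ∀ a b : ℝ, (∫ z in a..b, p z)
      = (Real.exp b - Real.exp a) / (Real.exp 1 - (1 - x) * Real.exp x) := by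
    intro a b
    simp only [hpval, div_eq_mul_inv]
    rw [intervalIntegral.integral_mul_const, integral_exp]
  constructor
  · rw [I1, hq]
    rw [← add_div, div_eq_one_iff_eq hD.ne']
    ring
  · have I2 : (∫ z in x..u, (1 + z) * p z)
        = (u * Real.exp u - x * Real.exp x) / (Real.exp 1 - (1 - x) * Real.exp x) := by
      simp only [hpval]
      have : ∀ z : ℝ, (1 + z) * (Real.exp z / (Real.exp 1 - (1 - x) * Real.exp x))
          = ((1 + z) * Real.exp z) * (Real.exp 1 - (1 - x) * Real.exp x)⁻¹ := by
        intro z; ring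
      simp only [this]
      rw [intervalIntegral.integral_mul_const, integ_one_add_mul_exp]
      ring
    have I3 : (∫ z in u..(1:ℝ), u * p z)
        = u * ((Real.exp 1 - Real.exp u) / (Real.exp 1 - (1 - x) * Real.exp x)) := by
      rw [intervalIntegral.integral_const_mul, I1]
    rw [I2, I3, hq]
    field_simp
    ring
end

section
/- Let G be a bipartite graph with parts U and V, and let H be the subgraph induced by U and a subset V_P ⊆ V. If M* is a maximum matching of G chosen to maximize the number of its edges lying in H, then the restriction of M* to H is a maximum matching of H. -/
/-- `M` is a matching in the bipartite graph with adjacency `Adj`: every pair in `M`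
is an edge, and distinct edges of `M` share no endpoints. -/
def IsMatchingIn {V : Type*} (Adj : V → V → Prop) (M : Finset (V × V)) : Prop :=
  (∀ e ∈ M, Adj e.1 e.2) ∧
  (∀ e ∈ M, ∀ f ∈ M, e ≠ f → e.1 ≠ f.1 ∧ e.2 ≠ f.2)

lemma matching_fst_inj {V : Type*} {Adj : V → V → Prop} {M : Finset (V × V)}
    (h : IsMatchingIn Adj M) : ∀ e ∈ M, ∀ f ∈ M, e.1 = f.1 → e = f := by
  intro e he f hf hef
  by_contra hne
  exact (h.2 e he f hf hne).1 hef

lemma matching_snd_inj {V : Type*} {Adj : V → V → Prop} {M : Finset (V × V)}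
    (h : IsMatchingIn Adj M) : ∀ e ∈ M, ∀ f ∈ M, e.2 = f.2 → e = f := by
  intro e he f hf hef
  by_contra hne
  exact (h.2 e he f hf hne).2 hef

theorem stmt_16 {Vt : Type*} [DecidableEq Vt] [Fintype Vt]
    (U V : Finset Vt) (VP : Finset Vt) (hVP : VP ⊆ V)
    (Adj : Vt → Vt → Prop) (hbip : ∀ a b, Adj a b → a ∈ U ∧ b ∈ V)
    (M : Finset (Vt × Vt))
    (hM : IsMatchingIn Adj M)
    (hmax : ∀ M' : Finset (Vt × Vt), IsMatchingIn Adj M' → M'.card ≤ M.card)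
    (hbest : ∀ M' : Finset (Vt × Vt), IsMatchingIn Adj M' →
      (∀ M'' : Finset (Vt × Vt), IsMatchingIn Adj M'' → M''.card ≤ M'.card) →
      (M'.filter (fun e => e.2 ∈ VP)).card ≤ (M.filter (fun e => e.2 ∈ VP)).card) :
    IsMatchingIn (fun a b => Adj a b ∧ b ∈ VP) (M.filter (fun e => e.2 ∈ VP)) ∧
    ∀ N : Finset (Vt × Vt), IsMatchingIn (fun a b => Adj a b ∧ b ∈ VP) N →
      N.card ≤ (M.filter (fun e => e.2 ∈ VP)).card := by
  classical
  constructor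
  · constructor
    · intro e he
      rw [Finset.mem_filter] at he
      exact ⟨hM.1 e he.1, he.2⟩
    · intro e he f hf hne
      rw [Finset.mem_filter] at he
      rw [Finset.mem_filter] at hf
      exact hM.2 e he.1 f hf.1 hne
  · intro N hN
    by_contra hlt
    push_neg at hlt
    -- Consider maximum matchings with the maximum number of H-edges,
    -- minimizing the number of H-edges not in N.
    have hex : ∃ n : ℕ, ∃ M' : Finset (Vt × Vt),
        (IsMatchingIn Adj M' ∧ M'.card = M.card ∧
          (M'.filter (fun e => e.2 ∈ VP)).card = (M.filter (fun e => e.2 ∈ VP)).card) ∧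
        ((M'.filter (fun e => e.2 ∈ VP)) \ N).card = n :=
      ⟨_, M, ⟨hM, rfl, rfl⟩, rfl⟩
    obtain ⟨M', ⟨hM'm, hM'c, hM'f⟩, hM'n⟩ := Nat.find_spec hex
    -- There is an edge of N whose right endpoint is unmatched by M'.
    have hfex : ∃ f ∈ N, ∀ e ∈ M', e.2 ≠ f.2 := by
      by_contra hcon
      push_neg at hcon
      have himg : N.image Prod.snd ⊆ (M'.filter (fun e => e.2 ∈ VP)).image Prod.snd := by
        intro v hv
        rw [Finset.mem_image] at hv
        obtain ⟨f, hfN, rfl⟩ := hv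
        obtain ⟨e, heM, he2⟩ := hcon f hfN
        exact Finset.mem_image.2
          ⟨e, Finset.mem_filter.2 ⟨heM, he2 ▸ (hN.1 f hfN).2⟩, he2⟩
      have h1 : N.card = (N.image Prod.snd).card :=
        (Finset.card_image_of_injOn (fun a ha b hb hab =>
          matching_snd_inj hN a ha b hb hab)).symm
      have h2 : (N.image Prod.snd).card ≤ ((M'.filter (fun e => e.2 ∈ VP)).image Prod.snd).card :=
        Finset.card_le_card himg
      have h3 : ((M'.filter (fun e => e.2 ∈ VP)).image Prod.snd).card
          ≤ (M'.filter (fun e => e.2 ∈ VP)).card := Finset.card_image_le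
      omega
    obtain ⟨f, hfN, hf2⟩ := hfex
    have hfVP : f.2 ∈ VP := (hN.1 f hfN).2
    have hfAdj : Adj f.1 f.2 := (hN.1 f hfN).1
    have hfnotM' : f ∉ M' := fun h => hf2 f h rfl
    by_cases hcase : ∃ e ∈ M', e.1 = f.1
    · obtain ⟨e, heM', he1⟩ := hcase
      have hef : e ≠ f := fun h => hfnotM' (h ▸ heM')
      -- exchange: M'' = M' - e + f
      set M'' : Finset (Vt × Vt) := insert f (M'.erase e) with hM''
      have hfnoterase : f ∉ M'.erase e := fun h => hfnotM' (Finset.mem_of_mem_erase h)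
      have hM''match : IsMatchingIn Adj M'' := by
        constructor
        · intro g hg
          rw [hM'', Finset.mem_insert] at hg
          rcases hg with hg | hg
          · rw [hg]; exact hfAdj
          · exact hM'm.1 g (Finset.mem_of_mem_erase hg)
        · intro g hg k hk hne
          rw [hM'', Finset.mem_insert] at hg hk
          rcases hg with hg | hg
          · rcases hk with hk | hk
            · exact absurd (hg.trans hk.symm) hne
            · subst hg
              have hkM' : k ∈ M' := Finset.mem_of_mem_erase hk
              have hkne : k ≠ e := Finset.ne_of_mem_erase hk
              constructor
              · intro h
                exact hkne (matching_fst_inj hM'm k hkM' e heM' (h.symm.trans he1.symm))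
              · intro h
                exact hf2 k hkM' h.symm
          · rcases hk with hk | hk
            · subst hk
              have hgM' : g ∈ M' := Finset.mem_of_mem_erase hg
              have hgne : g ≠ e := Finset.ne_of_mem_erase hg
              constructor
              · intro h
                exact hgne (matching_fst_inj hM'm g hgM' e heM' (h.trans he1.symm))
              · exact hf2 g hgM'
            · exact hM'm.2 g (Finset.mem_of_mem_erase hg) k (Finset.mem_of_mem_erase hk) hne
      have hcarderase : (M'.erase e).card + 1 = M'.card := Finset.card_erase_add_one heM'
      have hcardM'' : M''.card = M.card := by
        rw [hM'', Finset.card_insert_of_notMem hfnoterase]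
        omega
      have hfilter : M''.filter (fun x => x.2 ∈ VP)
          = insert f ((M'.filter (fun x => x.2 ∈ VP)).erase e) := by
        rw [hM'', Finset.filter_insert, if_pos hfVP, Finset.filter_erase]
      have hfnotfe : f ∉ (M'.filter (fun x => x.2 ∈ VP)).erase e :=
        fun h => hfnotM' (Finset.mem_filter.1 (Finset.mem_of_mem_erase h)).1
      by_cases heVP : e.2 ∈ VP
      · -- descent case: contradiction with minimality
        have hein : e ∈ M'.filter (fun x => x.2 ∈ VP) := Finset.mem_filter.2 ⟨heM', heVP⟩
        have hcf : ((M'.filter (fun x => x.2 ∈ VP)).erase e).card + 1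
            = (M'.filter (fun x => x.2 ∈ VP)).card := Finset.card_erase_add_one hein
        have hcardfilter : (M''.filter (fun x => x.2 ∈ VP)).card
            = (M.filter (fun x => x.2 ∈ VP)).card := by
          rw [hfilter, Finset.card_insert_of_notMem hfnotfe]
          omega
        have heN : e ∉ N := by
          intro heN
          have : e = f := by
            by_contra hne
            exact (hN.2 e heN f hfN hne).1 he1
          exact hef this
        have hein' : e ∈ (M'.filter (fun x => x.2 ∈ VP)) \ N :=
          Finset.mem_sdiff.2 ⟨hein, heN⟩
        have hsd : (M''.filter (fun x => x.2 ∈ VP)) \ N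
            = ((M'.filter (fun x => x.2 ∈ VP)) \ N).erase e := by
          rw [hfilter]
          ext g
          simp only [Finset.mem_sdiff, Finset.mem_erase, Finset.mem_insert]
          constructor
          · rintro ⟨rfl | ⟨hg1, hg2⟩, hg3⟩
            · exact absurd hfN hg3
            · exact ⟨hg1, hg2, hg3⟩
          · rintro ⟨hg1, hg2, hg3⟩
            exact ⟨Or.inr ⟨hg1, hg2⟩, hg3⟩
        have hpos : 0 < ((M'.filter (fun x => x.2 ∈ VP)) \ N).card :=
          Finset.card_pos.2 ⟨e, hein'⟩
        have hdec : ((M''.filter (fun x => x.2 ∈ VP)) \ N).card < Nat.find hex := by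
          rw [hsd, Finset.card_erase_of_mem hein']
          omega
        exact Nat.find_min hex hdec ⟨M'', ⟨hM''match, hcardM'', hcardfilter⟩, rfl⟩
      · -- improvement case: contradiction with hbest
        have henotf : e ∉ M'.filter (fun x => x.2 ∈ VP) :=
          fun h => heVP (Finset.mem_filter.1 h).2
        have hcardfilter : (M''.filter (fun x => x.2 ∈ VP)).card
            = (M.filter (fun x => x.2 ∈ VP)).card + 1 := by
          rw [hfilter, Finset.erase_eq_of_notMem henotf,
            Finset.card_insert_of_notMem (fun h => hfnotM' (Finset.mem_filter.1 h).1), hM'f]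
        have hM''max : ∀ K : Finset (Vt × Vt), IsMatchingIn Adj K → K.card ≤ M''.card :=
          fun K hK => hcardM'' ▸ hmax K hK
        have := hbest M'' hM''match hM''max
        omega
    · -- f can be added to M', contradicting maximality of M
      push_neg at hcase
      have hins : IsMatchingIn Adj (insert f M') := by
        constructor
        · intro g hg
          rcases Finset.mem_insert.1 hg with hg | hg
          · rw [hg]; exact hfAdj
          · exact hM'm.1 g hg
        · intro g hg k hk hne
          rcases Finset.mem_insert.1 hg with hg' | hg'
          · rcases Finset.mem_insert.1 hk with hk' | hk'
            · exact absurd (hg'.trans hk'.symm) hne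
            · subst hg'
              exact ⟨fun h => hcase k hk' h.symm, fun h => hf2 k hk' h.symm⟩
          · rcases Finset.mem_insert.1 hk with hk' | hk'
            · subst hk'
              exact ⟨hcase g hg', hf2 g hg'⟩
            · exact hM'm.2 g hg' k hk' hne
      have := hmax _ hins
      rw [Finset.card_insert_of_notMem hfnotM'] at this
      omega
end
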